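/- A d-dimensional subshift that is deterministic in every direction u ∈ ℝ^d \ {0} is a finite set, and hence only contains strongly periodic configurations. -/

import Mathlib

open scoped BigOperators

/-- A cell of the `d`-dimensional grid `ℤ^d`. -/
abbrev Cell (d : ℕ) := Fin d → ℤ

/-- A `d`-dimensional configuration with integer symbols. -/
abbrev Config (d : ℕ) := Cell d → ℤ

/-- Laurent polynomials in `d` variables with complex coefficients,
modelled as the monoid algebra of `ℤ^d` over `ℂ`. -/
abbrev LP (d : ℕ) := AddMonoidAlgebra ℂ (Cell d)

/-- The real (Euclidean) vector corresponding to an integer lattice vector. -/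
noncomputable def toR {d : ℕ} (v : Cell d) : EuclideanSpace ℝ (Fin d) :=
  WithLp.toLp 2 (fun i => (v i : ℝ))

/-- The formal product `f·c` of a Laurent polynomial and a configuration:
`(fc)_u = Σ_{v ∈ Supp(f)} f_v c_{u-v}`. -/
noncomputable def conv {d : ℕ} (f : LP d) (c : Config d) : Cell d → ℂ :=
  fun u => ∑ v ∈ f.coeff.support, f.coeff v * (c (u - v) : ℂ)

/-- `f` annihilates `c`: the formal product `f·c` is the zero power series. -/
def Annihilates {d : ℕ} (f : LP d) (c : Config d) : Prop :=
  ∀ u, conv f c u = 0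

/-- `t` is a vector of periodicity of `e`. -/
def IsPeriodOf {d : ℕ} {α : Type*} (e : Cell d → α) (t : Cell d) : Prop :=
  t ≠ 0 ∧ ∀ u, e (u + t) = e u

/-- `e` is strongly periodic: it has `d` vectors of periodicity that are
linearly independent over `ℝ`. -/
def StronglyPeriodic {d : ℕ} {α : Type*} (e : Cell d → α) : Prop :=
  ∃ T : Fin d → Cell d, (∀ i, IsPeriodOf e (T i)) ∧
    LinearIndependent ℝ (fun i => (fun j => ((T i j : ℤ) : ℝ)))

/-- `f` periodizes `c`: the formal product `f·c` is strongly periodic,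
i.e. `f ∈ Per(c)`. -/
def Periodizes {d : ℕ} (f : LP d) (c : Config d) : Prop :=
  StronglyPeriodic (conv f c)

/-- The translation of a configuration by `t`. -/
def shift {d : ℕ} (t : Cell d) (c : Config d) : Config d := fun u => c (u + t)

/-- A subshift: a set of configurations closed in the prodiscrete topology
and closed under translations. -/
def IsSubshift {d : ℕ} (X : Set (Config d)) : Prop :=
  IsClosed X ∧ ∀ c ∈ X, ∀ t : Cell d, shift t c ∈ X

/-- All configurations of `X` use symbols from one finite alphabet `A ⊆ ℤ`. -/
def FiniteAlphabet {d : ℕ} (X : Set (Config d)) : Prop :=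
  ∃ A : Finset ℤ, ∀ c ∈ X, ∀ u, c u ∈ A

/-- `f ∈ Ann(X)`: `f` annihilates every configuration of `X`. -/
def AnnX {d : ℕ} (f : LP d) (X : Set (Config d)) : Prop :=
  ∀ c ∈ X, Annihilates f c

/-- `f ∈ Per(X)`: `f` periodizes every configuration of `X`. -/
def PerX {d : ℕ} (f : LP d) (X : Set (Config d)) : Prop :=
  ∀ c ∈ X, Periodizes f c

/-- The difference binomial `x^t - 1`. -/
noncomputable def binom {d : ℕ} (t : Cell d) : LP d :=
  AddMonoidAlgebra.single t 1 - AddMonoidAlgebra.single 0 1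

/-- `X` is deterministic in the direction of `u`: the contents of a
configuration on the open discrete half space `H_u = {x ∈ ℤ^d : ⟨x,u⟩ < 0}`
determine the configuration completely. -/
def Deterministic {d : ℕ} (X : Set (Config d)) (u : EuclideanSpace ℝ (Fin d)) : Prop :=
  ∀ c ∈ X, ∀ c' ∈ X, (∀ x : Cell d, (inner ℝ (toR x) u : ℝ) < 0 → c x = c' x) → c = c'

/-- The `(d-1)`-dimensional subspace `S = ⟨u⟩^⊥` is expansive for `X`: `X` is
deterministic in the directions of both `u` and `-u`. -/
def ExpansiveSpace {d : ℕ} (X : Set (Config d))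
    (S : Submodule ℝ (EuclideanSpace ℝ (Fin d))) : Prop :=
  ∃ u : EuclideanSpace ℝ (Fin d), u ≠ 0 ∧ S = (Submodule.span ℝ {u})ᗮ ∧
    Deterministic X u ∧ Deterministic X (-u)

/-- Vectors `a` and `b` of `ℤ^d` are parallel. -/
def IsParallel {d : ℕ} (a b : Cell d) : Prop :=
  ∃ p q : ℤ, p ≠ 0 ∧ q ≠ 0 ∧ p • a = q • b

/-- A family of lattice vectors is pairwise linearly independent (over `ℝ`). -/
def PairwiseLinIndep {d m : ℕ} (t : Fin m → Cell d) : Prop :=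
  ∀ i j, i ≠ j → LinearIndependent ℝ ![toR (t i), toR (t j)]

/-- The set of `D`-patterns appearing in the configuration `c`. -/
def PattSetC {d : ℕ} (c : Config d) (D : Finset (Cell d)) : Set (D → ℤ) :=
  {p | ∃ t : Cell d, ∀ v : D, p v = c (t + v)}

/-- The set of `D`-patterns appearing in configurations of `X`. -/
def PattSet {d : ℕ} (X : Set (Config d)) (D : Finset (Cell d)) : Set (D → ℤ) :=
  {p | ∃ c ∈ X, ∃ t : Cell d, ∀ v : D, p v = c (t + v)}

/-- `c` is a tiling of `ℤ^d` by translations of the tile `D`: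
`c` is binary and every cell is covered exactly once, i.e.
`Σ_{v ∈ D} c_{u-v} = 1` for every `u`. -/
def IsTiling {d : ℕ} (D : Finset (Cell d)) (c : Config d) : Prop :=
  (∀ u, c u = 0 ∨ c u = 1) ∧ ∀ u : Cell d, ∑ v ∈ D, c (u - v) = 1

/-- The set `T_D` of all tilings of `ℤ^d` by translations of `D`. -/
def TilingSet {d : ℕ} (D : Finset (Cell d)) : Set (Config d) :=
  {c | IsTiling D c}

/-- The characteristic Laurent polynomial `f_D = Σ_{v ∈ D} x^v` of a finite shape. -/
noncomputable def charPoly {d : ℕ} (D : Finset (Cell d)) : LP d :=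
  ∑ v ∈ D, AddMonoidAlgebra.single v 1

/-- The radius-`r` Lee sphere `B_r^d = {v ∈ ℤ^d : |v 1| + ⋯ + |v d| ≤ r}`. -/
noncomputable def LeeSphere (d : ℕ) (r : ℤ) : Finset (Cell d) :=
  (Fintype.piFinset fun _ : Fin d => Finset.Icc (-r) r).filter fun v => ∑ i, |v i| ≤ r




section StmtEightAux

/-- positive lower bound for a finite family of positive reals -/
lemma exists_pos_lb {ι : Type*} (g : ι → ℝ) (s : Finset ι) :
    (∀ i ∈ s, 0 < g i) → ∃ ε : ℝ, 0 < ε ∧ ∀ i ∈ s, ε ≤ g i := by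
  classical
  induction s using Finset.induction_on with
  | empty => exact fun _ => ⟨1, one_pos, by simp⟩
  | @insert a s ha ih =>
      intro h
      obtain ⟨ε, hε, hle⟩ := ih (fun i hi => h i (Finset.mem_insert_of_mem hi))
      refine ⟨min ε (g a), lt_min hε (h a (Finset.mem_insert_self _ _)), ?_⟩
      intro i hi
      rcases Finset.mem_insert.mp hi with rfl | hi
      · exact min_le_right _ _
      · exact le_trans (min_le_left _ _) (hle i hi)

/-- nonnegative upper bound for a finite family of reals -/
lemma exists_ub {ι : Type*} (g : ι → ℝ) (s : Finset ι) :
    ∃ r : ℝ, 0 ≤ r ∧ ∀ i ∈ s, g i ≤ r := by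
  classical
  induction s using Finset.induction_on with
  | empty => exact ⟨0, le_refl _, by simp⟩
  | @insert a s ha ih =>
      obtain ⟨r, hr, hle⟩ := ih
      refine ⟨max r (g a), le_trans hr (le_max_left _ _), ?_⟩
      intro i hi
      rcases Finset.mem_insert.mp hi with rfl | hi
      · exact le_max_right _ _
      · exact le_trans (hle i hi) (le_max_left _ _)

/-- integer squared norm of a lattice vector -/
def Nz {d : ℕ} (x : Cell d) : ℤ := ∑ i, (x i) ^ 2

lemma Nz_nonneg {d : ℕ} (x : Cell d) : 0 ≤ Nz x :=
  Finset.sum_nonneg fun _ _ => sq_nonneg _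

lemma toR_add {d : ℕ} (x y : Cell d) : toR (x + y) = toR x + toR y := by
  ext i
  simp [toR, PiLp.add_apply]

lemma nz_cast {d : ℕ} (x : Cell d) : (Nz x : ℝ) = ‖toR x‖ ^ 2 := by
  rw [EuclideanSpace.norm_eq, Real.sq_sqrt (by positivity)]
  simp only [Nz, toR, Real.norm_eq_abs, sq_abs]
  push_cast
  rfl

lemma int_le_sq (a : ℤ) : a ≤ a ^ 2 := by
  rcases le_or_gt a 0 with h | h
  · nlinarith [sq_nonneg a]
  · nlinarith [mul_nonneg (by linarith : (0:ℤ) ≤ a - 1) (le_of_lt h)]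

lemma abs_le_of_sq_le {a M : ℤ} (h : a ^ 2 ≤ M) : -M ≤ a ∧ a ≤ M := by
  have h1 := int_le_sq a
  have h2 := int_le_sq (-a)
  constructor <;> nlinarith

end StmtEightAux

/-- A `d`-dimensional subshift that is deterministic in every direction
is finite, and hence only contains strongly periodic configurations. -/
theorem stmt8 {d : ℕ} (X : Set (Config d)) (hX : IsSubshift X) (hA : FiniteAlphabet X)
    (hdet : ∀ u : EuclideanSpace ℝ (Fin d), u ≠ 0 → Deterministic X u) :
    X.Finite ∧ ∀ c ∈ X, StronglyPeriodic c := by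
  classical
  obtain ⟨A, hA⟩ := hA
  -- X is compact
  have hXcpt : IsCompact X := by
    have hpi : IsCompact {c : Config d | ∀ u, c u ∈ (A : Set ℤ)} := by
      have h := isCompact_univ_pi (fun _ : Cell d => A.finite_toSet.isCompact)
      convert h using 1
      ext c
      simp [Set.mem_univ_pi]
    exact hpi.of_isClosed_subset hX.1 (fun c hc u => hA c hc u)
  -- finite determinism window in each direction
  have window : ∀ u : EuclideanSpace ℝ (Fin d), u ≠ 0 →
      ∃ F : Finset (Cell d), (∀ f ∈ F, (inner ℝ (toR f) u : ℝ) < 0) ∧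
        ∀ t : Cell d, ∀ c ∈ X, ∀ c' ∈ X,
          (∀ f ∈ F, c (f + t) = c' (f + t)) → c t = c' t := by
    intro u hu
    set K : Set (Config d × Config d) := (X ×ˢ X) ∩ {p | p.1 0 ≠ p.2 0} with hKdef
    have hKc : IsCompact K := by
      apply (hXcpt.prod hXcpt).inter_right
      have : {p : Config d × Config d | p.1 0 ≠ p.2 0} =
          (fun p : Config d × Config d => (p.1 0, p.2 0)) ⁻¹' {q : ℤ × ℤ | q.1 ≠ q.2} := rfl
      rw [this]
      exact (isClosed_discrete _).preimage
        (((continuous_apply (0 : Cell d)).comp continuous_fst).prodMk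
          ((continuous_apply (0 : Cell d)).comp continuous_snd))
    set U : Cell d → Set (Config d × Config d) := fun x =>
      if (inner ℝ (toR x) u : ℝ) < 0 then {p | p.1 x ≠ p.2 x} else ∅ with hUdef
    have hUopen : ∀ x, IsOpen (U x) := by
      intro x
      by_cases hx : (inner ℝ (toR x) u : ℝ) < 0
      · simp only [hUdef, if_pos hx]
        have : {p : Config d × Config d | p.1 x ≠ p.2 x} =
            (fun p : Config d × Config d => (p.1 x, p.2 x)) ⁻¹' {q : ℤ × ℤ | q.1 ≠ q.2} := rfl
        rw [this]
        exact (isOpen_discrete _).preimage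
          (((continuous_apply x).comp continuous_fst).prodMk
            ((continuous_apply x).comp continuous_snd))
      · simp only [hUdef, if_neg hx]
        exact isOpen_empty
    have hcover : K ⊆ ⋃ x, U x := by
      rintro ⟨c, c'⟩ ⟨⟨hc, hc'⟩, hne⟩
      by_contra hns
      have heq : c = c' := by
        apply hdet u hu c hc c' hc'
        intro x hx
        by_contra hne2
        exact hns (Set.mem_iUnion.mpr ⟨x, by simp only [hUdef, if_pos hx]; exact hne2⟩)
      exact hne (by rw [heq])
    obtain ⟨s, hs⟩ := hKc.elim_finite_subcover U hUopen hcover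
    refine ⟨s.filter (fun x => (inner ℝ (toR x) u : ℝ) < 0),
      fun f hf => (Finset.mem_filter.mp hf).2, ?_⟩
    have h0 : ∀ c ∈ X, ∀ c' ∈ X,
        (∀ f ∈ s.filter (fun x => (inner ℝ (toR x) u : ℝ) < 0), c f = c' f) → c 0 = c' 0 := by
      intro c hc c' hc' hag
      by_contra hne
      have hmem : (c, c') ∈ K := ⟨⟨hc, hc'⟩, hne⟩
      obtain ⟨x, hxs, hxU⟩ := Set.mem_iUnion₂.mp (hs hmem)
      by_cases hx : (inner ℝ (toR x) u : ℝ) < 0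
      · simp only [hUdef, if_pos hx] at hxU
        exact hxU (hag x (Finset.mem_filter.mpr ⟨hxs, hx⟩))
      · simp only [hUdef, if_neg hx] at hxU
        exact hxU
    intro t c hc c' hc' hag
    have h1 := h0 (shift t c) (hX.2 c hc t) (shift t c') (hX.2 c' hc' t)
      (fun f hf => hag f hf)
    simpa [shift] using h1
  -- windows adapted to each unit direction, with a uniform inner-product gap
  have hstep : ∀ u : Metric.sphere (0 : EuclideanSpace ℝ (Fin d)) 1,
      ∃ (F : Finset (Cell d)) (δ : ℝ), 0 < δ ∧
        (∀ f ∈ F, (inner ℝ (toR f) (u : EuclideanSpace ℝ (Fin d)) : ℝ) ≤ -δ) ∧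
        (∀ t : Cell d, ∀ c ∈ X, ∀ c' ∈ X,
          (∀ f ∈ F, c (f + t) = c' (f + t)) → c t = c' t) := by
    intro u
    have hu1 : ‖(u : EuclideanSpace ℝ (Fin d))‖ = 1 := mem_sphere_zero_iff_norm.mp u.2
    have hu0 : (u : EuclideanSpace ℝ (Fin d)) ≠ 0 := by
      intro h
      rw [h, norm_zero] at hu1
      exact one_ne_zero hu1.symm
    obtain ⟨F, hF1, hF2⟩ := window u hu0
    obtain ⟨δ, hδ, hδle⟩ := exists_pos_lb
      (fun f => -(inner ℝ (toR f) (u : EuclideanSpace ℝ (Fin d)) : ℝ)) F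
      (fun f hf => neg_pos.mpr (hF1 f hf))
    refine ⟨F, δ, hδ, fun f hf => ?_, hF2⟩
    have h := hδle f hf
    linarith
  choose F δ hδ hFle hFwin using hstep
  -- cover the unit sphere by finitely many of the associated open cones
  set V : Metric.sphere (0 : EuclideanSpace ℝ (Fin d)) 1 → Set (EuclideanSpace ℝ (Fin d)) :=
    fun u => {v | ∀ f ∈ F u, (inner ℝ (toR f) v : ℝ) < -(δ u) / 2} with hVdef
  have hVopen : ∀ u, IsOpen (V u) := by
    intro u
    have : V u = ⋂ f ∈ F u, {v | (inner ℝ (toR f) v : ℝ) < -(δ u) / 2} := by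
      ext v
      simp [hVdef]
    rw [this]
    exact isOpen_biInter_finset fun f _ =>
      isOpen_lt (Continuous.inner continuous_const continuous_id) continuous_const
  have hVmem : ∀ u : Metric.sphere (0 : EuclideanSpace ℝ (Fin d)) 1,
      (u : EuclideanSpace ℝ (Fin d)) ∈ V u := by
    intro u f hf
    have h1 := hFle u f hf
    have h2 := hδ u
    linarith
  obtain ⟨t0, ht0⟩ := (isCompact_sphere (0 : EuclideanSpace ℝ (Fin d)) 1).elim_finite_subcover
    V hVopen (fun v hv => Set.mem_iUnion.mpr ⟨⟨v, hv⟩, hVmem ⟨v, hv⟩⟩)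
  obtain ⟨ε, hε, hεle⟩ := exists_pos_lb (fun u => δ u / 2) t0 (fun u _ => half_pos (hδ u))
  obtain ⟨r, hr0, hrle⟩ := exists_ub (fun f => ‖toR f‖) (t0.sup F)
  set R : ℝ := (r ^ 2 + 1) / (2 * ε) with hRdef
  have hRpos : 0 < R := by positivity
  set M : ℤ := ⌈R ^ 2⌉ with hMdef
  have hM0 : 0 ≤ M := Int.ceil_nonneg (sq_nonneg _)
  -- a configuration is determined by its values on the ball Nz ≤ M
  have key : ∀ c ∈ X, ∀ c' ∈ X, (∀ y : Cell d, Nz y ≤ M → c y = c' y) → c = c' := by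
    intro c hc c' hc' hbase
    funext x
    have main : ∀ n : ℕ, ∀ x : Cell d, (Nz x).toNat ≤ n → c x = c' x := by
      intro n
      induction n using Nat.strong_induction_on with
      | _ n ih =>
        intro x hxn
        by_cases hle : Nz x ≤ M
        · exact hbase x hle
        · push_neg at hle
          have hxpos : 0 < Nz x := lt_of_le_of_lt hM0 hle
          have hnormsq : R ^ 2 < ‖toR x‖ ^ 2 := by
            have h1 : (M : ℝ) < (Nz x : ℝ) := by exact_mod_cast hle
            have h2 : R ^ 2 ≤ (M : ℝ) := Int.le_ceil _
            rw [← nz_cast]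
            linarith
          have hxnorm : R < ‖toR x‖ := lt_of_pow_lt_pow_left₀ 2 (norm_nonneg _) hnormsq
          have hxpos' : (0 : ℝ) < ‖toR x‖ := lt_trans hRpos hxnorm
          set v : EuclideanSpace ℝ (Fin d) := ‖toR x‖⁻¹ • toR x with hvdef
          have hvS : v ∈ Metric.sphere (0 : EuclideanSpace ℝ (Fin d)) 1 := by
            rw [mem_sphere_zero_iff_norm, hvdef, norm_smul, norm_inv, norm_norm]
            exact inv_mul_cancel₀ (ne_of_gt hxpos')
          obtain ⟨u, hu0, huV⟩ := Set.mem_iUnion₂.mp (ht0 hvS)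
          have hdec : ∀ f ∈ F u, (Nz (f + x)).toNat < (Nz x).toNat := by
            intro f hf
            have h1 : (inner ℝ (toR f) v : ℝ) < -(δ u) / 2 := huV f hf
            have h2 : ε ≤ δ u / 2 := hεle u hu0
            have h3 : (inner ℝ (toR f) v : ℝ) = ‖toR x‖⁻¹ * (inner ℝ (toR f) (toR x) : ℝ) := by
              rw [hvdef, real_inner_smul_right]
            have hlt2 : ‖toR x‖⁻¹ * (inner ℝ (toR f) (toR x) : ℝ) < -ε := by
              rw [← h3]
              linarith
            have h4 : (inner ℝ (toR f) (toR x) : ℝ) ≤ -ε * ‖toR x‖ := by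
              have h5 := mul_lt_mul_of_pos_left hlt2 hxpos'
              rw [← mul_assoc, mul_inv_cancel₀ (ne_of_gt hxpos'), one_mul] at h5
              nlinarith
            have h5 : ‖toR f‖ ≤ r := hrle f (Finset.le_iff_subset.mp (Finset.le_sup hu0) hf)
            have h5' : ‖toR f‖ ^ 2 ≤ r ^ 2 := by nlinarith [norm_nonneg (toR f)]
            have h8 : r ^ 2 + 1 < 2 * ε * ‖toR x‖ := by
              have h9 : R < ‖toR x‖ := hxnorm
              rw [hRdef] at h9
              have h10 := (div_lt_iff₀ (by positivity : (0:ℝ) < 2 * ε)).mp h9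
              nlinarith
            have h6 : (Nz (f + x) : ℝ) < (Nz x : ℝ) := by
              rw [nz_cast, nz_cast, toR_add]
              have h7 := norm_add_sq_real (toR f) (toR x)
              nlinarith
            have h9 : Nz (f + x) < Nz x := by exact_mod_cast h6
            exact (Int.toNat_lt_toNat hxpos).mpr h9
          have hag : ∀ f ∈ F u, c (f + x) = c' (f + x) := fun f hf =>
            ih _ (lt_of_lt_of_le (hdec f hf) hxn) _ le_rfl
          exact hFwin u x c hc c' hc' hag
    exact main _ x le_rfl
  -- finiteness of X
  set D : Finset (Cell d) := Fintype.piFinset (fun _ : Fin d => Finset.Icc (-M) M) with hDdef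
  have hmemD : ∀ y : Cell d, Nz y ≤ M → y ∈ D := by
    intro y hy
    rw [hDdef, Fintype.mem_piFinset]
    intro i
    rw [Finset.mem_Icc]
    have h1 : (y i) ^ 2 ≤ Nz y :=
      Finset.single_le_sum (f := fun j => (y j) ^ 2) (fun j _ => sq_nonneg _) (Finset.mem_univ i)
    exact abs_le_of_sq_le (le_trans h1 hy)
  have hXfin : X.Finite := by
    have hinj : Set.InjOn (fun c : Config d => fun y : D => c y) X := by
      intro c hc c' hc' h
      exact key c hc c' hc' (fun y hy => congrFun h ⟨y, hmemD y hy⟩)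
    apply Set.Finite.of_finite_image ?_ hinj
    apply Set.Finite.subset (Set.Finite.pi (fun _ : D => A.finite_toSet))
    rintro g ⟨c, hcX, rfl⟩
    exact fun y _ => hA c hcX y
  refine ⟨hXfin, ?_⟩
  -- strong periodicity of every configuration
  intro c hcX
  have hper : ∀ i : Fin d, ∃ k : ℤ, k ≠ 0 ∧
      ∀ u : Cell d, c (u + k • (Pi.single i 1 : Cell d)) = c u := by
    intro i
    set g : ℤ → Config d := fun n => shift (n • (Pi.single i 1 : Cell d)) c with hgdef
    have hgX : ∀ n, g n ∈ X := fun n => hX.2 c hcX _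
    have hninj : ¬ Function.Injective g := by
      intro hinj
      exact Set.infinite_range_of_injective hinj (hXfin.subset (Set.range_subset_iff.mpr hgX))
    obtain ⟨a, b, hgab, hab⟩ := Function.not_injective_iff.mp hninj
    refine ⟨a - b, sub_ne_zero.mpr hab, ?_⟩
    intro u
    have h3 := congrFun hgab (u - b • (Pi.single i 1 : Cell d))
    simp only [hgdef, shift] at h3
    have e1 : u + (a - b) • (Pi.single i 1 : Cell d) =
        (u - b • (Pi.single i 1 : Cell d)) + a • (Pi.single i 1 : Cell d) := by
      rw [sub_smul]
      abel
    have e2 : (u - b • (Pi.single i 1 : Cell d)) + b • (Pi.single i 1 : Cell d) = u := by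
      abel
    rw [e1, h3, e2]
  choose k hk1 hk2 using hper
  refine ⟨fun i => k i • (Pi.single i 1 : Cell d), fun i => ⟨?_, hk2 i⟩, ?_⟩
  · intro h0
    have h1 := congrFun h0 i
    simp [Pi.single_apply] at h1
    exact hk1 i h1
  · rw [Fintype.linearIndependent_iff]
    intro gc hsum i
    have h0 := congrFun hsum i
    have hval : ∀ x : Fin d, ((k x • (Pi.single x 1 : Cell d)) i : ℝ) =
        if i = x then (k x : ℝ) else 0 := by
      intro x
      simp [Pi.single_apply]
    simp only [Finset.sum_apply, Pi.smul_apply, Pi.zero_apply, smul_eq_mul] at h0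
    rw [Finset.sum_eq_single i (fun b _ hb => by simp [Pi.single_eq_of_ne (Ne.symm hb)])
      (fun h => absurd (Finset.mem_univ i) h)] at h0
    simp only [Pi.single_eq_same, mul_one] at h0
    have hki : ((k i : ℤ) : ℝ) ≠ 0 := Int.cast_ne_zero.mpr (hk1 i)
    exact (mul_eq_zero.mp h0).resolve_right hki
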